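/- If the numbers E(n,g) satisfy the Harer–Zagier recurrence (n+1)E(n,g) = 2(2n-1)E(n-1,g) + (n-1)(2n-1)(2n-3)E(n-2,g-1) with E(0,0)=1 and E(n,g)=0 for g<0 or n<2g, then for all even n = 2g, E(n, n/2) = (2n)! / (2^n * (n+1)!). -/
import Mathlib


/-- Harer–Zagier recurrence implies `E (2g) g = (2n)!/(2^n (n+1)!)` where `n = 2g`. -/
theorem stmt_1 (E : ℕ → ℤ → ℚ)
    (h0 : E 0 0 = 1)
    (hbd : ∀ (n : ℕ) (g : ℤ), g < 0 ∨ (n : ℤ) < 2 * g → E n g = 0)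
    (hrec : ∀ n : ℕ, 1 ≤ n → ∀ g : ℤ,
      ((n : ℚ) + 1) * E n g =
        2 * (2 * n - 1) * E (n - 1) g +
          ((n : ℚ) - 1) * (2 * n - 1) * (2 * n - 3) * E (n - 2) (g - 1)) :
    ∀ g : ℕ, E (2 * g) (g : ℤ) =
      (Nat.factorial (2 * (2 * g)) : ℚ) /
        (2 ^ (2 * g) * Nat.factorial (2 * g + 1)) := by
  intro g
  induction g with
  | zero => simpa using h0
  | succ g ih =>
    have h1 : E (2 * g + 1) ((g : ℤ) + 1) = 0 :=
      hbd _ _ (Or.inr (by push_cast; linarith))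
    have hr := hrec (2 * (g + 1)) (by omega) ((g : ℤ) + 1)
    have e1 : 2 * (g + 1) - 1 = 2 * g + 1 := by omega
    have e2 : 2 * (g + 1) - 2 = 2 * g := by omega
    have hg : ((g : ℤ) + 1) - 1 = (g : ℤ) := by ring
    rw [e1, e2, hg, h1, ih] at hr
    have hfac1 : ((2 * (2 * (g + 1))).factorial : ℚ) =
        ((4 * g + 4) * (4 * g + 3) * (4 * g + 2) * (4 * g + 1)) *
          ((2 * (2 * g)).factorial : ℚ) := by
      have h : 2 * (2 * (g + 1)) = (2 * (2 * g)) + 1 + 1 + 1 + 1 := by omega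
      rw [h]
      simp [Nat.factorial_succ]
      ring
    have hfac2 : ((2 * (g + 1) + 1).factorial : ℚ) =
        ((2 * g + 3) * (2 * g + 2)) * ((2 * g + 1).factorial : ℚ) := by
      have h : 2 * (g + 1) + 1 = (2 * g + 1) + 1 + 1 := by omega
      rw [h]
      simp [Nat.factorial_succ]
      ring
    have hne1 : ((2 * g + 1).factorial : ℚ) ≠ 0 := by
      exact_mod_cast Nat.factorial_ne_zero _
    have hne2 : (2 : ℚ) ^ (2 * g) ≠ 0 := by positivity
    have hne3 : ((2 * (g + 1) : ℕ) : ℚ) + 1 ≠ 0 := by positivity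
    have key : E (2 * (g + 1)) ((g : ℤ) + 1) =
        (((2 * (g + 1) : ℕ) : ℚ) - 1) * (2 * ((2 * (g + 1) : ℕ) : ℚ) - 1) *
          (2 * ((2 * (g + 1) : ℕ) : ℚ) - 3) *
          ((2 * (2 * g)).factorial / (2 ^ (2 * g) * (2 * g + 1).factorial)) /
          (((2 * (g + 1) : ℕ) : ℚ) + 1) := by
      field_simp at hr ⊢
      linarith [hr]
    rw [show ((g + 1 : ℕ) : ℤ) = (g : ℤ) + 1 by push_cast; ring, key, hfac1, hfac2]
    have hne4 : (2 * (g : ℚ) + 3) ≠ 0 := by positivity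
    push_cast
    field_simp
    ring
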